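/- arXiv:1607.02855 — 5 statements merged into one kernel-verified Lean document; each statement's English description precedes it below -/
import Mathlib

section
/- If {A_n} are non-trivial i.i.d. complex random variables with E[log⁺|A_0|] < ∞, then almost surely limsup_{n→∞} |A_n|^{1/n} = 1. -/
open MeasureTheory ProbabilityTheory Filter
open scoped ENNReal

/-- Summability of tail probabilities of an integrable nonnegative random variable. -/
lemma aux_tsum_lt_top {Ω : Type*} [MeasurableSpace Ω] (μ : Measure Ω) [IsProbabilityMeasure μ]
    {X : Ω → ℝ} (hint : Integrable X μ) (hnonneg : 0 ≤ X) :
    (∑' j : ℕ, μ {ω | (j : ℝ) < X ω}) < ∞ := by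
  letI : MeasureSpace Ω := ⟨μ⟩
  haveI : IsProbabilityMeasure (ℙ : Measure Ω) := ‹_›
  exact ProbabilityTheory.tsum_prob_mem_Ioi_lt_top hint hnonneg

theorem aux_upper {Ω : Type*} [MeasurableSpace Ω] (μ : Measure Ω) [IsProbabilityMeasure μ]
    (A : ℕ → Ω → ℂ) (hmeas : ∀ n, Measurable (A n))
    (hident : ∀ n, IdentDistrib (A n) (A 0) μ μ)
    (hint : Integrable (fun ω => max (Real.log (‖A 0 ω‖)) 0) μ) :
    ∀ᵐ ω ∂μ,
      Filter.limsup (fun n : ℕ => ENNReal.ofReal ((‖A n ω‖) ^ (1 / (n : ℝ))))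
        atTop ≤ 1 := by
  have upper : ∀ k : ℕ, ∀ᵐ ω ∂μ,
      Filter.limsup (fun n : ℕ => ENNReal.ofReal ((‖A n ω‖) ^ (1 / (n : ℝ))))
        atTop ≤ ENNReal.ofReal (Real.exp (1 / (k + 1 : ℝ))) := by
    intro k
    set ε : ℝ := 1 / (k + 1 : ℝ) with hε
    have hεpos : 0 < ε := by positivity
    set s : ℕ → Set Ω := fun n => {ω | Real.exp (ε * n) < ‖A n ω‖} with hs
    have hsum : (∑' n, μ (s n)) ≠ ∞ := by
      have hY : Integrable (fun ω => ε⁻¹ * max (Real.log (‖A 0 ω‖)) 0) μ :=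
        hint.const_mul _
      have hYnonneg : 0 ≤ fun ω => ε⁻¹ * max (Real.log (‖A 0 ω‖)) 0 := by
        intro ω
        have : (0:ℝ) ≤ max (Real.log (‖A 0 ω‖)) 0 := le_max_right _ _
        positivity
      have hb := aux_tsum_lt_top μ hY hYnonneg
      refine (lt_of_le_of_lt (ENNReal.tsum_le_tsum fun n => ?_) hb).ne
      have hEq : μ (s n) = μ {ω | Real.exp (ε * n) < ‖A 0 ω‖} := by
        have hms : MeasurableSet {z : ℂ | Real.exp (ε * n) < ‖z‖} :=
          (isOpen_lt continuous_const continuous_norm).measurableSet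
        exact (hident n).measure_mem_eq hms
      rw [hEq]
      refine measure_mono fun ω hω => ?_
      simp only [Set.mem_setOf_eq] at hω ⊢
      have h1 : ε * n < Real.log (‖A 0 ω‖) := by
        have := Real.log_lt_log (Real.exp_pos _) hω
        rwa [Real.log_exp] at this
      have h2 : ε * n < max (Real.log (‖A 0 ω‖)) 0 :=
        lt_max_of_lt_left h1
      calc (n:ℝ) = ε⁻¹ * (ε * n) := by field_simp
        _ < ε⁻¹ * max (Real.log (‖A 0 ω‖)) 0 := by
            exact mul_lt_mul_of_pos_left h2 (by positivity)
    filter_upwards [ae_eventually_notMem hsum] with ω hω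
    refine limsup_le_of_le (by isBoundedDefault) ?_
    filter_upwards [hω, eventually_ge_atTop 1] with n hn hn1
    simp only [hs, Set.mem_setOf_eq, not_lt] at hn
    have hnpos : (0:ℝ) < n := by exact_mod_cast hn1
    have habs : (0:ℝ) ≤ ‖A n ω‖ := norm_nonneg _
    have h1 : ‖A n ω‖ ^ (1/(n:ℝ)) ≤ (Real.exp (ε * n)) ^ (1/(n:ℝ)) :=
      Real.rpow_le_rpow habs hn (by positivity)
    have h2 : (Real.exp (ε * n)) ^ (1/(n:ℝ)) = Real.exp ε := by
      rw [← Real.exp_mul]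
      congr 1
      field_simp
    exact ENNReal.ofReal_le_ofReal (h2 ▸ h1)
  have := ae_all_iff.2 upper
  filter_upwards [this] with ω hω
  have h0 : Filter.Tendsto (fun k : ℕ => 1 / (k + 1 : ℝ)) atTop (nhds 0) :=
    tendsto_one_div_add_atTop_nhds_zero_nat
  have h1 : Filter.Tendsto (fun k : ℕ => Real.exp (1 / (k + 1 : ℝ))) atTop (nhds 1) := by
    simpa [Function.comp_def] using (Real.continuous_exp.tendsto 0).comp h0
  have h2 : Filter.Tendsto (fun k : ℕ => ENNReal.ofReal (Real.exp (1 / (k + 1 : ℝ))))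
      atTop (nhds 1) := by
    simpa [Function.comp_def] using (ENNReal.continuous_ofReal.tendsto 1).comp h1
  exact ge_of_tendsto' h2 hω


theorem aux_lower {Ω : Type*} [MeasurableSpace Ω] (μ : Measure Ω) [IsProbabilityMeasure μ]
    (A : ℕ → Ω → ℂ) (hmeas : ∀ n, Measurable (A n))
    (hindep : iIndepFun A μ)
    (hident : ∀ n, IdentDistrib (A n) (A 0) μ μ)
    (hnontriv : μ {ω | A 0 ω = 0} < 1) :
    ∀ᵐ ω ∂μ,
      (1:ℝ≥0∞) ≤ Filter.limsup
        (fun n : ℕ => ENNReal.ofReal ((‖A n ω‖) ^ (1 / (n : ℝ)))) atTop := by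
  -- there is δ > 0 with μ {|A 0| ≥ δ} > 0
  have hpos : 0 < μ {ω | A 0 ω ≠ 0} := by
    have hm : MeasurableSet {ω | A 0 ω = 0} := (hmeas 0) (measurableSet_singleton 0)
    have : {ω | A 0 ω ≠ 0} = {ω | A 0 ω = 0}ᶜ := rfl
    rw [this, measure_compl hm (measure_ne_top μ _), measure_univ]
    exact tsub_pos_iff_lt.2 hnontriv
  obtain ⟨δ, hδpos, hδ⟩ : ∃ δ : ℝ, 0 < δ ∧ 0 < μ {ω | δ ≤ ‖A 0 ω‖} := by
    by_contra h
    push_neg at h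
    have hz : ∀ k : ℕ, μ {ω | 1/(k+1:ℝ) ≤ ‖A 0 ω‖} = 0 := fun k =>
      le_antisymm (h _ (by positivity)) zero_le
    have hsub : {ω | A 0 ω ≠ 0} ⊆ ⋃ k : ℕ, {ω | 1/(k+1:ℝ) ≤ ‖A 0 ω‖} := by
      intro ω hω
      have habs : 0 < ‖A 0 ω‖ := by
        simpa [norm_pos_iff] using hω
      obtain ⟨k, hk⟩ := exists_nat_one_div_lt habs
      exact Set.mem_iUnion.2 ⟨k, hk.le⟩
    have : μ {ω | A 0 ω ≠ 0} ≤ μ (⋃ k : ℕ, {ω | 1/(k+1:ℝ) ≤ ‖A 0 ω‖}) := measure_mono hsub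
    rw [measure_iUnion_null hz] at this
    exact absurd (le_antisymm this zero_le) hpos.ne'
  set S : Set ℂ := {z | δ ≤ ‖z‖} with hS
  have hSm : MeasurableSet S := (isClosed_le continuous_const continuous_norm).measurableSet
  set s : ℕ → Set Ω := fun n => A n ⁻¹' S with hs
  have hsm : ∀ n, MeasurableSet (s n) := fun n => (hmeas n) hSm
  have hiid : iIndepSet s μ := by
    refine (iIndepSet_iff_meas_biInter hsm).2 fun F => ?_
    exact hindep.measure_inter_preimage_eq_mul F (fun i _ => hSm)
  have hconst : ∀ n, μ (s n) = μ (s 0) := fun n => (hident n).measure_mem_eq hSm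
  have hsum : (∑' n, μ (s n)) = ∞ := by
    simp_rw [hconst]
    exact ENNReal.tsum_const_eq_top_of_ne_zero hδ.ne'
  have hone := measure_limsup_eq_one hsm hiid hsum
  have hmls : MeasurableSet (limsup s atTop) := MeasurableSet.measurableSet_limsup hsm
  have hae : ∀ᵐ ω ∂μ, ω ∈ limsup s atTop := by
    rw [ae_iff]
    have : {ω | ¬ ω ∈ limsup s atTop} = (limsup s atTop)ᶜ := rfl
    rw [this, measure_compl hmls (measure_ne_top μ _), measure_univ, hone, tsub_self]
  filter_upwards [hae] with ω hω
  have hfreq : ∃ᶠ n in atTop, δ ≤ ‖A n ω‖ :=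
    Filter.mem_limsup_iff_frequently_mem.1 hω
  -- δ^(1/n) → 1
  have htend : Filter.Tendsto (fun n : ℕ => δ ^ (1/(n:ℝ))) atTop (nhds 1) := by
    have h0 : Filter.Tendsto (fun n : ℕ => Real.log δ * (1/(n:ℝ))) atTop (nhds 0) := by
      simpa using tendsto_one_div_atTop_nhds_zero_nat.const_mul (Real.log δ)
    have h1 : Filter.Tendsto (fun n : ℕ => Real.exp (Real.log δ * (1/(n:ℝ)))) atTop (nhds 1) := by
      simpa [Function.comp_def] using (Real.continuous_exp.tendsto 0).comp h0
    refine h1.congr fun n => ?_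
    rw [← Real.exp_log hδpos, ← Real.exp_mul, Real.log_exp]
  refine le_of_forall_lt fun c hc => ?_
  have hcne : c ≠ ⊤ := hc.ne_top
  set t : ℝ := (c.toReal + 1)/2 with ht
  have hct : c.toReal < 1 := by
    rw [← ENNReal.toReal_one]
    exact ENNReal.toReal_strict_mono ENNReal.one_ne_top hc
  have ht1 : t < 1 := by rw [ht]; linarith
  have hctt : c.toReal < t := by rw [ht]; linarith
  have hclt : c < ENNReal.ofReal t :=
    (ENNReal.lt_ofReal_iff_toReal_lt hcne).2 hctt
  refine lt_of_lt_of_le hclt ?_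
  refine le_limsup_of_frequently_le' ?_
  have hev : ∀ᶠ n : ℕ in atTop, t < δ ^ (1/(n:ℝ)) := htend.eventually (eventually_gt_nhds ht1)
  refine (hfreq.and_eventually hev).mono fun n hn => ?_
  obtain ⟨h1, h2⟩ := hn
  refine ENNReal.ofReal_le_ofReal ?_
  calc t ≤ δ ^ (1/(n:ℝ)) := h2.le
    _ ≤ ‖A n ω‖ ^ (1/(n:ℝ)) :=
        Real.rpow_le_rpow hδpos.le h1 (by positivity)

/-- If `{A n}` are non-trivial i.i.d. complex random variables with `E[log⁺ |A 0|] < ∞`, then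
almost surely `limsup |A n| ^ (1/n) = 1`. -/
theorem stmt2 {Ω : Type*} [MeasurableSpace Ω] (μ : Measure Ω) [IsProbabilityMeasure μ]
    (A : ℕ → Ω → ℂ) (hmeas : ∀ n, Measurable (A n))
    (hindep : iIndepFun A μ)
    (hident : ∀ n, IdentDistrib (A n) (A 0) μ μ)
    (hnontriv : μ {ω | A 0 ω = 0} < 1)
    (hint : Integrable (fun ω => max (Real.log ‖A 0 ω‖) 0) μ) :
    ∀ᵐ ω ∂μ,
      Filter.limsup (fun n : ℕ => ENNReal.ofReal (‖A n ω‖ ^ (1 / (n : ℝ))))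
        atTop = 1 := by
  filter_upwards [aux_upper μ A hmeas hident hint, aux_lower μ A hmeas hindep hident hnontriv]
    with ω h1 h2
  exact le_antisymm h1 h2
end

section
/- For a sequence of nonnegative reals a_n, if limsup_{n→∞} a_n^{1/n} = 1 then limsup_{n→∞} (max_{0≤k≤n} a_k)^{1/n} = 1. -/
open Filter

/-- For a sequence of nonnegative reals `a n`, if `limsup (a n) ^ (1/n) = 1` then
`limsup (max_{0 ≤ k ≤ n} a k) ^ (1/n) = 1`. -/
theorem stmt4 (a : ℕ → ℝ) (ha : ∀ n, 0 ≤ a n)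
    (h : Filter.limsup (fun n : ℕ => ENNReal.ofReal ((a n) ^ (1 / (n : ℝ)))) atTop = 1) :
    Filter.limsup
      (fun n : ℕ =>
        ((Finset.range (n + 1)).sup (fun k => ENNReal.ofReal (a k))) ^ (1 / (n : ℝ)))
      atTop = 1 := by
  have hrw : (fun n : ℕ => ENNReal.ofReal ((a n) ^ (1 / (n : ℝ))))
      = fun n : ℕ => (ENNReal.ofReal (a n)) ^ (1 / (n : ℝ)) := by
    funext n
    exact (ENNReal.ofReal_rpow_of_nonneg (ha n) (one_div_nonneg.mpr (Nat.cast_nonneg n))).symm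
  rw [hrw] at h
  set F : ℕ → ENNReal := fun n =>
    ((Finset.range (n + 1)).sup (fun k => ENNReal.ofReal (a k))) ^ (1 / (n : ℝ)) with hF
  -- lower bound
  have hge : 1 ≤ limsup F atTop := by
    rw [← h]
    refine limsup_le_limsup (Eventually.of_forall fun n => ?_)
    exact ENNReal.rpow_le_rpow
      (Finset.le_sup (f := fun k => ENNReal.ofReal (a k)) (Finset.self_mem_range_succ n))
      (one_div_nonneg.mpr (Nat.cast_nonneg _))
  -- upper bound
  have hle : limsup F atTop ≤ 1 := by
    by_contra hc
    push_neg at hc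
    obtain ⟨c, hc1, hcL⟩ := exists_between hc
    have hcT : c ≠ ⊤ := (hcL.trans_le le_top).ne
    -- eventually ofReal (a n) ≤ c ^ n
    have hev : ∀ᶠ n : ℕ in atTop, ENNReal.ofReal (a n) ≤ c ^ (n : ℝ) := by
      have hlt := eventually_lt_of_limsup_lt (h ▸ hc1 :
        limsup (fun n : ℕ => (ENNReal.ofReal (a n)) ^ (1 / (n : ℝ))) atTop < c)
      filter_upwards [hlt, eventually_ge_atTop 1] with n hn hn1
      have hn0 : (n : ℝ) ≠ 0 := Nat.cast_ne_zero.mpr (by omega)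
      have h2 := ENNReal.rpow_le_rpow hn.le (Nat.cast_nonneg n : (0:ℝ) ≤ (n : ℝ))
      rwa [← ENNReal.rpow_mul, one_div, inv_mul_cancel₀ hn0, ENNReal.rpow_one] at h2
    obtain ⟨N, hN⟩ := eventually_atTop.mp hev
    set M : ENNReal := ((Finset.range N).sup fun k => ENNReal.ofReal (a k)) ⊔ 1 with hM
    have hMT : M ≠ ⊤ := by
      rw [hM]
      have h1 : ((Finset.range N).sup fun k => ENNReal.ofReal (a k)) < ⊤ :=
        (Finset.sup_lt_iff bot_lt_top).mpr fun k _ => ENNReal.ofReal_lt_top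
      exact (sup_lt_iff.mpr ⟨h1, ENNReal.one_lt_top⟩).ne
    -- choose m with M ≤ c ^ m
    have hc1T : 1 < c.toReal := by
      simpa using (ENNReal.toReal_lt_toReal ENNReal.one_ne_top hcT).mpr hc1
    obtain ⟨m, hm⟩ := (tendsto_pow_atTop_atTop_of_one_lt hc1T).eventually_ge_atTop
      M.toReal |>.exists
    have hMc : M ≤ c ^ m := by
      rw [← ENNReal.toReal_le_toReal hMT (by exact ENNReal.pow_ne_top hcT),
        ENNReal.toReal_pow]
      exact hm
    -- eventually F n ≤ c
    have hevF : ∀ᶠ n : ℕ in atTop, F n ≤ c := by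
      filter_upwards [eventually_ge_atTop N, eventually_ge_atTop m, eventually_ge_atTop 1]
        with n hnN hnm hn1
      have hn0 : (n : ℝ) ≠ 0 := Nat.cast_ne_zero.mpr (by omega)
      have hsup : ((Finset.range (n + 1)).sup fun k => ENNReal.ofReal (a k)) ≤ c ^ (n : ℝ) := by
        refine Finset.sup_le fun k hk => ?_
        rcases lt_or_ge k N with hkN | hkN
        · calc ENNReal.ofReal (a k)
              ≤ M := by
                rw [hM]
                exact le_trans (Finset.le_sup (f := fun k => ENNReal.ofReal (a k)) (Finset.mem_range.mpr hkN)) le_sup_left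
            _ ≤ c ^ m := hMc
            _ = c ^ (m : ℝ) := (ENNReal.rpow_natCast c m).symm
            _ ≤ c ^ (n : ℝ) := ENNReal.rpow_le_rpow_of_exponent_le hc1.le
                (Nat.cast_le.mpr hnm)
        · calc ENNReal.ofReal (a k)
              ≤ c ^ (k : ℝ) := hN k hkN
            _ ≤ c ^ (n : ℝ) := ENNReal.rpow_le_rpow_of_exponent_le hc1.le
                (Nat.cast_le.mpr (Nat.lt_succ_iff.mp (Finset.mem_range.mp hk)))
      calc F n ≤ (c ^ (n : ℝ)) ^ (1 / (n : ℝ)) := ENNReal.rpow_le_rpow hsup (one_div_nonneg.mpr (Nat.cast_nonneg _))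
        _ = c := by
            rw [← ENNReal.rpow_mul, one_div, mul_inv_cancel₀ hn0, ENNReal.rpow_one]
    exact absurd (limsup_le_of_le (by isBoundedDefault) hevF) hcL.not_ge
  exact le_antisymm hle hge
end

section
/- If {A_n} are non-trivial i.i.d. complex random variables, then there exists b > 0 such that almost surely liminf_{n→∞} (max_{n - b·log n < k ≤ n} |A_k|)^{1/n} ≥ 1. -/
open MeasureTheory ProbabilityTheory Filter
open scoped Classical

/-- If `{A n}` are non-trivial i.i.d. complex random variables, then there exists `b > 0` such
that almost surely `liminf (max_{n - b log n < k ≤ n} |A k|) ^ (1/n) ≥ 1`. -/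
theorem stmt5 {Ω : Type*} [MeasurableSpace Ω] (μ : Measure Ω) [IsProbabilityMeasure μ]
    (A : ℕ → Ω → ℂ) (hmeas : ∀ n, Measurable (A n))
    (hindep : iIndepFun A μ)
    (hident : ∀ n, IdentDistrib (A n) (A 0) μ μ)
    (hnontriv : μ {ω | A 0 ω = 0} < 1) :
    ∃ b : ℝ, 0 < b ∧ ∀ᵐ ω ∂μ,
      1 ≤ Filter.liminf
        (fun n : ℕ =>
          (((Finset.range (n + 1)).filter
              (fun k : ℕ => (n : ℝ) - b * Real.log n < (k : ℝ))).sup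
            (fun k : ℕ => ENNReal.ofReal (‖A k ω‖))) ^ (1 / (n : ℝ)))
        atTop := by
  -- Step A: find δ > 0 with μ {|A 0| < δ} < 1
  obtain ⟨δ, hδ, hq⟩ : ∃ δ : ℝ, 0 < δ ∧ μ {ω | ‖A 0 ω‖ < δ} < 1 := by
    by_contra h
    push_neg at h
    set S : ℕ → Set Ω := fun m => {ω | ‖A 0 ω‖ < 1 / (m + 1)} with hS
    have hSmeas : ∀ m, MeasurableSet (S m) := fun m => by
      have : S m = A 0 ⁻¹' {z | ‖z‖ < 1 / (m + 1)} := rfl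
      rw [this]
      exact (hmeas 0) (continuous_norm.measurable measurableSet_Iio)
    have hanti : Antitone S := by
      intro m m' hmm ω hω
      have hω' : ‖A 0 ω‖ < 1 / (m' + 1) := hω
      show ‖A 0 ω‖ < 1 / (m + 1)
      refine lt_of_lt_of_le hω' ?_
      have hcast : (m : ℝ) ≤ (m' : ℝ) := Nat.cast_le.mpr hmm
      apply one_div_le_one_div_of_le (by positivity)
      linarith
    have hinter : ⋂ m, S m = {ω | A 0 ω = 0} := by
      ext ω
      simp only [Set.mem_iInter, Set.mem_setOf_eq, hS]
      constructor
      · intro hall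
        by_contra hne
        have habs : 0 < ‖A 0 ω‖ := by
          simpa [AbsoluteValue.pos_iff] using hne
        obtain ⟨m, hm⟩ := exists_nat_one_div_lt habs
        exact absurd (hall m) (by push_cast; linarith [hm])
      · intro h0 m
        rw [h0]
        simp
        positivity
    have htend : Tendsto (μ ∘ S) atTop (nhds (μ {ω | A 0 ω = 0})) := by
      rw [← hinter]
      exact tendsto_measure_iInter_atTop (fun m => (hSmeas m).nullMeasurableSet)
        hanti ⟨0, measure_ne_top μ _⟩
    have hconst : (μ ∘ S) = fun _ => 1 := by
      funext m
      refine le_antisymm prob_le_one ?_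
      exact h (1 / (m + 1)) (by positivity)
    rw [hconst] at htend
    have := tendsto_nhds_unique htend tendsto_const_nhds
    rw [this] at hnontriv
    exact lt_irrefl _ hnontriv
  set q := μ {ω | ‖A 0 ω‖ < δ} with hqdef
  have hqne : q ≠ ⊤ := (lt_of_lt_of_le hq le_top).ne
  set r : ℝ := max q.toReal (1 / 2) with hrdef
  have hr0 : (0 : ℝ) < r := lt_of_lt_of_le (by norm_num) (le_max_right _ _)
  have hr1 : r < 1 := by
    refine max_lt ?_ (by norm_num)
    rw [← ENNReal.toReal_one]
    exact (ENNReal.toReal_lt_toReal hqne ENNReal.one_ne_top).mpr hq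
  have hqr : q ≤ ENNReal.ofReal r := by
    calc q = ENNReal.ofReal q.toReal := (ENNReal.ofReal_toReal hqne).symm
      _ ≤ ENNReal.ofReal r := ENNReal.ofReal_le_ofReal (le_max_left _ _)
  have hlogr : Real.log r < 0 := Real.log_neg hr0 hr1
  set b : ℝ := 3 / (-Real.log r) with hbdef
  have hb : 0 < b := by
    apply div_pos (by norm_num)
    linarith
  refine ⟨b, hb, ?_⟩
  -- the bad events
  set m : ℕ → ℕ := fun n => min n (Nat.floor (b * Real.log n)) with hmdef
  set s : ℕ → Set Ω := fun n =>
    ⋂ k ∈ Finset.Ioc (n - m n) n, {ω | ‖A k ω‖ < δ} with hsdef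
  have hmn : ∀ n, m n ≤ n := fun n => min_le_left _ _
  have hcard : ∀ n, (Finset.Ioc (n - m n) n).card = m n := by
    intro n
    rw [Nat.card_Ioc, Nat.sub_sub_self (hmn n)]
  -- measure of the bad events
  have hμs : ∀ n, μ (s n) = q ^ m n := by
    intro n
    have hBmeas : MeasurableSet {z : ℂ | ‖z‖ < δ} :=
      continuous_norm.measurable measurableSet_Iio
    have := hindep.meas_biInter (S := Finset.Ioc (n - m n) n)
      (s := fun k => {ω | ‖A k ω‖ < δ})
      (fun k _ => ⟨{z : ℂ | ‖z‖ < δ}, hBmeas, rfl⟩)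
    rw [hsdef, this]
    have heach : ∀ k, μ {ω | ‖A k ω‖ < δ} = q := by
      intro k
      have : {ω | ‖A k ω‖ < δ} = A k ⁻¹' {z | ‖z‖ < δ} := rfl
      rw [this, (hident k).measure_mem_eq hBmeas]
      rfl
    rw [Finset.prod_congr rfl (fun k _ => heach k), Finset.prod_const, hcard n]
  -- summability of measures of bad events
  have hsummable : Summable (fun n : ℕ => r ^ m n) := by
    have hsum3 : Summable (fun n : ℕ => r⁻¹ * (n : ℝ) ^ (-3 : ℝ)) :=
      (Real.summable_nat_rpow.mpr (by norm_num)).mul_left _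
    refine summable_of_isBigO_nat hsum3 ?_
    rw [Asymptotics.isBigO_iff]
    refine ⟨1, ?_⟩
    -- eventually b * log n ≤ n
    have hlog_lt : ∀ᶠ n : ℕ in atTop, b * Real.log n ≤ n := by
      have h1 := (Real.isLittleO_log_id_atTop.bound (c := b⁻¹) (by positivity))
      have h2 : Tendsto (fun n : ℕ => (n : ℝ)) atTop atTop := tendsto_natCast_atTop_atTop
      filter_upwards [h2.eventually h1, eventually_ge_atTop 1] with n hn hn1
      have hn0 : (0 : ℝ) < n := by exact_mod_cast hn1
      have hlogn : 0 ≤ Real.log n := Real.log_natCast_nonneg n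
      rw [Real.norm_eq_abs, Real.norm_eq_abs, abs_of_nonneg hlogn, id,
        abs_of_nonneg hn0.le] at hn
      calc b * Real.log n ≤ b * (b⁻¹ * n) := by
            apply mul_le_mul_of_nonneg_left hn hb.le
        _ = n := by field_simp
    filter_upwards [hlog_lt, eventually_ge_atTop 2] with n hn hn2
    have hn0 : (0 : ℝ) < n := by positivity
    have hx0 : 0 ≤ b * Real.log n := by
      apply mul_nonneg hb.le (Real.log_natCast_nonneg n)
    have hfloor_le : Nat.floor (b * Real.log n) ≤ n := by
      calc Nat.floor (b * Real.log n) ≤ Nat.floor (n : ℝ) := Nat.floor_mono hn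
        _ = n := Nat.floor_natCast n
    have hmn_eq : m n = Nat.floor (b * Real.log n) := min_eq_right hfloor_le
    have hkey : r ^ m n ≤ r⁻¹ * (n : ℝ) ^ (-3 : ℝ) := by
      have h1 : b * Real.log n - 1 ≤ (m n : ℝ) := by
        rw [hmn_eq]
        have := Nat.sub_one_lt_floor (b * Real.log n)
        linarith
      calc r ^ m n = r ^ ((m n : ℕ) : ℝ) := (Real.rpow_natCast r (m n)).symm
        _ ≤ r ^ (b * Real.log n - 1) :=
            Real.rpow_le_rpow_of_exponent_ge hr0 hr1.le h1
        _ = r⁻¹ * r ^ (b * Real.log n) := by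
            rw [Real.rpow_sub hr0, Real.rpow_one, div_eq_inv_mul]
        _ = r⁻¹ * (n : ℝ) ^ (-3 : ℝ) := by
            congr 1
            rw [Real.rpow_def_of_pos hr0, Real.rpow_def_of_pos hn0]
            congr 1
            have hlr : Real.log r ≠ 0 := hlogr.ne
            have hbr : b * Real.log r = -3 := by
              rw [hbdef, div_mul_eq_mul_div, div_eq_iff (neg_ne_zero.mpr hlr)]
              ring
            calc Real.log r * (b * Real.log n) = (b * Real.log r) * Real.log n := by ring
              _ = Real.log n * (-3) := by rw [hbr]; ring
    rw [Real.norm_eq_abs, Real.norm_eq_abs, abs_of_nonneg (by positivity),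
      abs_of_nonneg (by positivity), one_mul]
    exact hkey
  have htsum : (∑' n, μ (s n)) ≠ ⊤ := by
    have hle : ∀ n, μ (s n) ≤ ENNReal.ofReal (r ^ m n) := by
      intro n
      rw [hμs n]
      calc q ^ m n ≤ (ENNReal.ofReal r) ^ m n := pow_le_pow_left' hqr _
        _ = ENNReal.ofReal (r ^ m n) := (ENNReal.ofReal_pow hr0.le _).symm
    have : (∑' n, μ (s n)) ≤ ∑' n, ENNReal.ofReal (r ^ m n) :=
      ENNReal.tsum_le_tsum hle
    refine (lt_of_le_of_lt this ?_).ne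
    rw [← ENNReal.ofReal_tsum_of_nonneg (fun n => by positivity) hsummable]
    exact ENNReal.ofReal_lt_top
  -- Borel–Cantelli
  have hae := ae_eventually_notMem htsum
  -- limit of (ofReal δ) ^ (1/n)
  have htend1 : Tendsto (fun n : ℕ => (ENNReal.ofReal δ) ^ (1 / (n : ℝ))) atTop (nhds 1) := by
    have h1 : Tendsto (fun n : ℕ => δ ^ (1 / (n : ℝ))) atTop (nhds 1) := by
      have heq : ∀ n : ℕ, δ ^ (1 / (n : ℝ)) = Real.exp (Real.log δ * (1 / (n : ℝ))) := by
        intro n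
        rw [Real.rpow_def_of_pos hδ]
      simp_rw [heq]
      have : Tendsto (fun n : ℕ => Real.log δ * (1 / (n : ℝ))) atTop (nhds 0) := by
        have := tendsto_one_div_atTop_nhds_zero_nat (𝕜 := ℝ)
        simpa using this.const_mul (Real.log δ)
      simpa [Function.comp_def] using (Real.continuous_exp.continuousAt.tendsto.comp this)
    have h2 : ∀ n : ℕ, (ENNReal.ofReal δ) ^ (1 / (n : ℝ)) =
        ENNReal.ofReal (δ ^ (1 / (n : ℝ))) := by
      intro n
      rw [← ENNReal.ofReal_rpow_of_pos hδ]
    simp_rw [h2]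
    have := (ENNReal.continuous_ofReal.continuousAt.tendsto.comp h1)
    simpa [Function.comp_def] using this
  filter_upwards [hae] with ω hω
  have hlim_eq : Filter.liminf (fun n : ℕ => (ENNReal.ofReal δ) ^ (1 / (n : ℝ))) atTop = 1 :=
    htend1.liminf_eq
  rw [← hlim_eq]
  refine Filter.liminf_le_liminf ?_
  -- eventually the sup is at least ofReal δ
  have hlogpos : ∀ᶠ n : ℕ in atTop, 1 ≤ m n := by
    have : Tendsto (fun n : ℕ => b * Real.log n) atTop atTop :=
      (Real.tendsto_log_atTop.comp tendsto_natCast_atTop_atTop).const_mul_atTop hb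
    filter_upwards [this.eventually_ge_atTop 1, eventually_ge_atTop 1] with n hn hn1
    rw [hmdef]
    exact le_min hn1 (Nat.le_floor (by exact_mod_cast hn))
  filter_upwards [hω, eventually_ge_atTop 1] with n hn hn1
  -- from ω ∉ s n, get a witness k
  have : ∃ k ∈ Finset.Ioc (n - m n) n, ¬ (‖A k ω‖ < δ) := by
    by_contra hc
    push_neg at hc
    exact hn (Set.mem_iInter₂.mpr fun k hk => hc k hk)
  obtain ⟨k, hkmem, hkδ⟩ := this
  push_neg at hkδ
  rw [Finset.mem_Ioc] at hkmem
  have hkrange : k ∈ (Finset.range (n + 1)).filter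
      (fun k : ℕ => (n : ℝ) - b * Real.log n < (k : ℝ)) := by
    rw [Finset.mem_filter, Finset.mem_range]
    refine ⟨Nat.lt_succ_of_le hkmem.2, ?_⟩
    have h1 : ((n - m n : ℕ) : ℝ) < (k : ℝ) := by exact_mod_cast hkmem.1
    have h2 : ((n - m n : ℕ) : ℝ) = (n : ℝ) - (m n : ℝ) := by
      rw [Nat.cast_sub (hmn n)]
    have h3 : (m n : ℝ) ≤ b * Real.log n := by
      have : (m n : ℕ) ≤ Nat.floor (b * Real.log n) := min_le_right _ _
      calc (m n : ℝ) ≤ (Nat.floor (b * Real.log n) : ℝ) := by exact_mod_cast this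
        _ ≤ b * Real.log n := Nat.floor_le (by
            apply mul_nonneg hb.le (Real.log_natCast_nonneg n))
    rw [h2] at h1
    linarith
  have hsup : ENNReal.ofReal δ ≤
      ((Finset.range (n + 1)).filter
        (fun k : ℕ => (n : ℝ) - b * Real.log n < (k : ℝ))).sup
        (fun k : ℕ => ENNReal.ofReal (‖A k ω‖)) := by
    calc ENNReal.ofReal δ ≤ ENNReal.ofReal (‖A k ω‖) :=
          ENNReal.ofReal_le_ofReal hkδ
      _ ≤ _ := Finset.le_sup (f := fun k : ℕ => ENNReal.ofReal (‖A k ω‖)) hkrange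
  exact ENNReal.rpow_le_rpow hsup (by positivity)
end

section
/- If {A_n} are non-trivial i.i.d. complex random variables, then almost surely it is not the case that there exist c, q ∈ (0,1) and a subsequence n_m → ∞ with |A_n| ≤ q^n for all n with c·n_m ≤ n ≤ n_m (Hadamard–Ostrowski gaps). -/
open MeasureTheory ProbabilityTheory Filter Topology
open scoped ENNReal

lemma geomShift (p : ℝ≥0∞) (hp : p < 1) (C : ℕ) : ∑' k : ℕ, p ^ (k - C) ≠ ⊤ := by
  rcases eq_or_ne p 0 with h0 | h0
  · subst h0
    have hz : ∀ k ∉ Finset.range (C + 1), (0 : ℝ≥0∞) ^ (k - C) = 0 := by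
      intro k hk
      rw [Finset.mem_range, not_lt] at hk
      rw [zero_pow (by omega)]
    rw [tsum_eq_sum hz]
    refine (ENNReal.sum_lt_top.2 fun i _ => ?_).ne
    exact lt_of_le_of_lt (pow_le_one₀ zero_le zero_le_one) ENNReal.one_lt_top
  · have hb : ∀ k : ℕ, p ^ (k - C) ≤ p ^ k * (p ^ C)⁻¹ := by
      intro k
      rw [mul_comm, ← ENNReal.div_eq_inv_mul]
      rw [ENNReal.le_div_iff_mul_le (Or.inl (pow_ne_zero C h0))
        (Or.inl (ENNReal.pow_ne_top (lt_trans hp ENNReal.one_lt_top).ne))]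
      rw [← pow_add]
      exact pow_le_pow_of_le_one zero_le hp.le (by omega)
    refine ne_top_of_le_ne_top ?_ (ENNReal.tsum_le_tsum hb)
    rw [ENNReal.tsum_mul_right, ENNReal.tsum_geometric]
    exact ENNReal.mul_ne_top (ENNReal.inv_ne_top.2 (tsub_pos_of_lt hp).ne')
      (ENNReal.inv_ne_top.2 (pow_ne_zero C h0))

lemma sumDiv (p : ℝ≥0∞) (hp : p < 1) (D C : ℕ) (hD : 0 < D) :
    ∑' N : ℕ, p ^ (N / D - C) ≠ ⊤ := by
  haveI : NeZero D := ⟨hD.ne'⟩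
  have he := ((Nat.divModEquiv D).symm.tsum_eq (fun N => p ^ (N / D - C)))
  rw [← he]
  have hcong : ∀ x : ℕ × Fin D, p ^ (((Nat.divModEquiv D).symm x) / D - C) = p ^ (x.1 - C) := by
    intro x
    simp only [Nat.divModEquiv_symm_apply]
    rw [mul_comm, Nat.mul_add_div hD, Nat.div_eq_of_lt x.2.is_lt, add_zero]
  rw [tsum_congr hcong, ENNReal.tsum_prod']
  have hD2 : ∀ k : ℕ, (∑' _r : Fin D, p ^ (k - C)) = (D : ℝ≥0∞) * p ^ (k - C) := by
    intro k
    rw [tsum_fintype, Finset.sum_const, Finset.card_univ, Fintype.card_fin, nsmul_eq_mul]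
  rw [tsum_congr hD2, ENNReal.tsum_mul_left]
  exact ENNReal.mul_ne_top (ENNReal.natCast_ne_top D) (geomShift p hp C)

/-- Key step: for a fixed `ρ ∈ (0,1)`, the event that some strictly increasing sequence `nm`
witnesses `|A n| ≤ ρ^n` on all of `[ρ·nm m, nm m]` is null. -/
lemma mainZero {Ω : Type*} [MeasurableSpace Ω] (μ : Measure Ω) [IsProbabilityMeasure μ]
    (A : ℕ → Ω → ℂ)
    (hindep : iIndepFun A μ)
    (hident : ∀ n, IdentDistrib (A n) (A 0) μ μ)
    (ε : ℝ) (hε0 : 0 < ε)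
    (hp1 : μ (A 0 ⁻¹' {z : ℂ | ‖z‖ ≤ ε}) < 1)
    (ρ : ℝ) (hρ0 : 0 < ρ) (hρ1 : ρ < 1) :
    μ {ω | ∃ nm : ℕ → ℕ, StrictMono nm ∧ ∀ m n : ℕ, ρ * (nm m : ℝ) ≤ (n : ℝ) → n ≤ nm m →
      ‖A n ω‖ ≤ ρ ^ n} = 0 := by
  set Bε : Set ℂ := {z : ℂ | ‖z‖ ≤ ε} with hBε
  have hBmeas : MeasurableSet Bε :=
    measurableSet_le continuous_norm.measurable measurable_const
  set p : ℝ≥0∞ := μ (A 0 ⁻¹' Bε) with hpdef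
  -- choose D with 1/D ≤ 1 - ρ
  obtain ⟨D, hD⟩ := exists_nat_ge (1 / (1 - ρ))
  have h1ρ : 0 < 1 - ρ := by linarith
  have hD0 : 0 < D := by
    by_contra h
    push_neg at h
    interval_cases D
    simp only [Nat.cast_zero] at hD
    have : 0 < 1 / (1 - ρ) := by positivity
    linarith
  have hDρ : 1 / (D : ℝ) ≤ 1 - ρ := by
    rw [div_le_iff₀ (by exact_mod_cast hD0)]
    rw [div_le_iff₀ h1ρ] at hD
    linarith
  -- choose n₀ with ρ^n₀ ≤ ε
  obtain ⟨n₀, hn₀⟩ := exists_pow_lt_of_lt_one hε0 hρ1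
  -- the events
  set S : ℕ → Finset ℕ := fun N => Finset.Icc (max n₀ ⌈ρ * N⌉₊) N with hS
  set E : ℕ → Set Ω := fun N => ⋂ n ∈ S N, A n ⁻¹' Bε with hE
  -- inclusion into limsup
  have hsub : {ω | ∃ nm : ℕ → ℕ, StrictMono nm ∧ ∀ m n : ℕ, ρ * (nm m : ℝ) ≤ (n : ℝ) →
      n ≤ nm m → ‖A n ω‖ ≤ ρ ^ n} ⊆ limsup E atTop := by
    rintro ω ⟨nm, hmono, h⟩
    rw [mem_limsup_iff_frequently_mem, frequently_atTop]
    intro M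
    refine ⟨nm M, hmono.le_apply, ?_⟩
    simp only [hE, Set.mem_iInter]
    intro n hn
    rw [hS, Finset.mem_Icc] at hn
    have hn₀n : n₀ ≤ n := le_trans (le_max_left _ _) hn.1
    have hρn : ρ * (nm M : ℝ) ≤ (n : ℝ) :=
      Nat.ceil_le.mp (le_trans (le_max_right _ _) hn.1)
    have := h M n hρn hn.2
    refine le_trans this (le_trans ?_ hn₀.le)
    exact pow_le_pow_of_le_one hρ0.le hρ1.le hn₀n
  -- measure of E N
  have hmeasE : ∀ N, μ (E N) ≤ p ^ (N / D - n₀) := by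
    intro N
    have heq : μ (E N) = ∏ n ∈ S N, μ (A n ⁻¹' Bε) :=
      hindep.meas_biInter (fun n _ => ⟨Bε, hBmeas, rfl⟩)
    have hprod : ∏ n ∈ S N, μ (A n ⁻¹' Bε) = p ^ (S N).card := by
      rw [Finset.prod_congr rfl (fun n _ => (hident n).measure_mem_eq hBmeas),
        Finset.prod_const]
    rw [heq, hprod]
    -- card bound
    have hceil : ⌈ρ * (N : ℝ)⌉₊ ≤ N - N / D := by
      rw [Nat.ceil_le]
      have h1 : ((N - N / D : ℕ) : ℝ) = (N : ℝ) - (N / D : ℕ) := by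
        rw [Nat.cast_sub (Nat.div_le_self N D)]
      rw [h1]
      have h2 : ((N / D : ℕ) : ℝ) ≤ (N : ℝ) / D := Nat.cast_div_le
      have h3 : ρ * (N : ℝ) ≤ (N : ℝ) - (N : ℝ) / D := by
        have : (N : ℝ) / D = (N : ℝ) * (1 / D) := by ring
        rw [this]
        nlinarith [Nat.cast_nonneg (α := ℝ) N]
      linarith
    have hcard : N / D - n₀ ≤ (S N).card := by
      rw [hS]
      rw [Nat.card_Icc]
      have hmx : max n₀ ⌈ρ * (N : ℝ)⌉₊ ≤ n₀ + (N - N / D) :=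
        max_le (Nat.le_add_right _ _) (le_add_of_le_of_nonneg hceil (Nat.zero_le _)
          |>.trans_eq (Nat.add_comm _ _))
      have hdle : N / D ≤ N := Nat.div_le_self N D
      omega
    exact pow_le_pow_of_le_one zero_le hp1.le hcard
  -- Borel–Cantelli
  have hBC : μ (limsup E atTop) = 0 := by
    apply measure_limsup_atTop_eq_zero
    refine ne_top_of_le_ne_top (sumDiv p hp1 D n₀ hD0) (ENNReal.tsum_le_tsum hmeasE)
  exact measure_mono_null hsub hBC

/-- If `{A n}` are non-trivial i.i.d. complex random variables, then almost surely there are no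
Hadamard–Ostrowski gaps: it is not the case that there exist `c, q ∈ (0,1)` and a strictly
increasing sequence `n_m` with `|A n| ≤ q^n` for all `n` with `c·n_m ≤ n ≤ n_m`. -/
theorem stmt7 {Ω : Type*} [MeasurableSpace Ω] (μ : Measure Ω) [IsProbabilityMeasure μ]
    (A : ℕ → Ω → ℂ) (hmeas : ∀ n, Measurable (A n))
    (hindep : iIndepFun A μ)
    (hident : ∀ n, IdentDistrib (A n) (A 0) μ μ)
    (hnontriv : μ {ω | A 0 ω = 0} < 1) :
    ∀ᵐ ω ∂μ, ¬ ∃ (c q : ℝ) (nm : ℕ → ℕ),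
      c ∈ Set.Ioo (0 : ℝ) 1 ∧ q ∈ Set.Ioo (0 : ℝ) 1 ∧ StrictMono nm ∧
      ∀ m : ℕ, ∀ n : ℕ, c * (nm m : ℝ) ≤ (n : ℝ) → n ≤ nm m →
        ‖A n ω‖ ≤ q ^ n := by
  -- Step 1: find ε > 0 with μ(|A 0| ≤ ε) < 1
  have hε : ∃ ε : ℝ, 0 < ε ∧ μ (A 0 ⁻¹' {z : ℂ | ‖z‖ ≤ ε}) < 1 := by
    by_contra hcon
    push_neg at hcon
    set s : ℕ → Set Ω := fun k => A 0 ⁻¹' {z : ℂ | ‖z‖ ≤ 1 / (k + 1)} with hs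
    have hms : ∀ k, NullMeasurableSet (s k) μ := fun k =>
      ((hmeas 0) (measurableSet_le continuous_norm.measurable
        measurable_const)).nullMeasurableSet
    have hanti : Antitone s := by
      intro k l hkl ω hω
      simp only [hs, Set.mem_preimage, Set.mem_setOf_eq] at *
      refine le_trans hω ?_
      apply one_div_le_one_div_of_le (by positivity)
      exact_mod_cast by exact_mod_cast add_le_add_left (Nat.cast_le.2 hkl) 1
    have hinter : ⋂ k, s k = {ω | A 0 ω = 0} := by
      ext ω
      simp only [hs, Set.mem_iInter, Set.mem_preimage, Set.mem_setOf_eq]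
      constructor
      · intro h
        by_contra hne
        have habs : 0 < ‖A 0 ω‖ := norm_pos_iff.mpr hne
        obtain ⟨n, hn⟩ := exists_nat_one_div_lt habs
        exact absurd (h n) (not_le.2 hn)
      · intro h k
        rw [h]
        simp only [norm_zero]
        positivity
    have htend : Tendsto (μ ∘ s) atTop (𝓝 (μ (⋂ n, s n))) :=
      tendsto_measure_iInter_atTop hms hanti ⟨0, measure_ne_top μ _⟩
    have h1le : (1 : ℝ≥0∞) ≤ μ (⋂ n, s n) := by
      refine ge_of_tendsto' htend fun k => ?_
      exact hcon (1 / (k + 1)) (by positivity)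
    rw [hinter] at h1le
    exact absurd hnontriv (not_lt.2 h1le)
  obtain ⟨ε, hε0, hεlt⟩ := hε
  -- Step 2: covering by countably many fixed-ρ events
  set B : ℕ → Set Ω := fun j => {ω | ∃ nm : ℕ → ℕ, StrictMono nm ∧
    ∀ m n : ℕ, (1 - 1 / ((j : ℝ) + 2)) * (nm m : ℝ) ≤ (n : ℝ) → n ≤ nm m →
      ‖A n ω‖ ≤ (1 - 1 / ((j : ℝ) + 2)) ^ n} with hB
  have hρj : ∀ j : ℕ, 0 < 1 - 1 / ((j : ℝ) + 2) ∧ 1 - 1 / ((j : ℝ) + 2) < 1 := by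
    intro j
    have h2 : (2 : ℝ) ≤ (j : ℝ) + 2 := by
      have := Nat.cast_nonneg (α := ℝ) j
      linarith
    have hpos : 0 < (j : ℝ) + 2 := by positivity
    constructor
    · have : 1 / ((j : ℝ) + 2) ≤ 1 / 2 := by
        apply one_div_le_one_div_of_le (by norm_num) h2
      linarith
    · have : 0 < 1 / ((j : ℝ) + 2) := by positivity
      linarith
  have hBnull : ∀ j, μ (B j) = 0 := fun j =>
    mainZero μ A hindep hident ε hε0 hεlt _ (hρj j).1 (hρj j).2
  have hcov : {ω | ∃ (c q : ℝ) (nm : ℕ → ℕ),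
      c ∈ Set.Ioo (0 : ℝ) 1 ∧ q ∈ Set.Ioo (0 : ℝ) 1 ∧ StrictMono nm ∧
      ∀ m : ℕ, ∀ n : ℕ, c * (nm m : ℝ) ≤ (n : ℝ) → n ≤ nm m →
        ‖A n ω‖ ≤ q ^ n} ⊆ ⋃ j : ℕ, B j := by
    rintro ω ⟨c, q, nm, ⟨hc0, hc1⟩, ⟨hq0, hq1⟩, hmono, h⟩
    have hδ0 : 0 < 1 - max c q := by
      simp only [sub_pos, max_lt_iff]
      exact ⟨hc1, hq1⟩
    obtain ⟨j, hj⟩ := exists_nat_ge (1 / (1 - max c q))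
    have hjδ : 1 / ((j : ℝ) + 2) ≤ 1 - max c q := by
      rw [div_le_iff₀ (by positivity)]
      rw [div_le_iff₀ hδ0] at hj
      nlinarith [hδ0]
    have hmρ : max c q ≤ 1 - 1 / ((j : ℝ) + 2) := by linarith
    have hcρ : c ≤ 1 - 1 / ((j : ℝ) + 2) := le_trans (le_max_left _ _) hmρ
    have hqρ : q ≤ 1 - 1 / ((j : ℝ) + 2) := le_trans (le_max_right _ _) hmρ
    refine Set.mem_iUnion.2 ⟨j, nm, hmono, fun m n h1 h2 => ?_⟩
    have hcn : c * (nm m : ℝ) ≤ (n : ℝ) :=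
      le_trans (mul_le_mul_of_nonneg_right hcρ (Nat.cast_nonneg _)) h1
    exact le_trans (h m n hcn h2) (pow_le_pow_left₀ hq0.le hqρ n)
  have hzero : μ {ω | ∃ (c q : ℝ) (nm : ℕ → ℕ),
      c ∈ Set.Ioo (0 : ℝ) 1 ∧ q ∈ Set.Ioo (0 : ℝ) 1 ∧ StrictMono nm ∧
      ∀ m : ℕ, ∀ n : ℕ, c * (nm m : ℝ) ≤ (n : ℝ) → n ≤ nm m →
        ‖A n ω‖ ≤ q ^ n} = 0 :=
    measure_mono_null hcov (measure_iUnion_null hBnull)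
  exact measure_eq_zero_iff_ae_notMem.mp hzero
end

section
/- Let c_1 ≥ c_2 > 0, ρ ∈ (0,1), and n ∈ ℕ with n large. Suppose a ≥ ((c_2 + 2c_1)/(c_2 ρ))^n and 1 ≤ a_k ≤ a^{k/n} for 1 ≤ k ≤ n−1, and a_0 < (√n/2)(c_2/c_1)·((c_2+2c_1)/c_2)^n. Then c_1√n·(a_0·(c_2/c_1)(1/√n) + ∑_{k=1}^{n−1} (aρ^n)^{k/n}) < c_2√n·aρ^n. -/
/-- Key deterministic estimate in the Rouché argument: for `c₁ ≥ c₂ > 0`, `ρ ∈ (0,1)` and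
large `n`, if `a ≥ ((c₂ + 2c₁)/(c₂ρ))^n`, `1 ≤ aₖ ≤ a^(k/n)` for `1 ≤ k ≤ n-1`, and
`a₀ < (√n/2)(c₂/c₁)((c₂+2c₁)/c₂)^n`, then
`c₁√n (a₀ (c₂/c₁)(1/√n) + ∑_{k=1}^{n-1} (aρ^n)^(k/n)) < c₂√n · aρ^n`. -/
theorem stmt12 (c₁ c₂ ρ : ℝ) (hc : c₁ ≥ c₂) (hc₂ : 0 < c₂) (hρ : ρ ∈ Set.Ioo (0 : ℝ) 1) :
    ∃ N : ℕ, ∀ n : ℕ, N ≤ n → ∀ a a₀ : ℝ, ∀ ak : ℕ → ℝ,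
      ((c₂ + 2 * c₁) / (c₂ * ρ)) ^ n ≤ a →
      (∀ k : ℕ, 1 ≤ k → k ≤ n - 1 → 1 ≤ ak k ∧ ak k ≤ a ^ ((k : ℝ) / n)) →
      a₀ < (Real.sqrt n / 2) * (c₂ / c₁) * ((c₂ + 2 * c₁) / c₂) ^ n →
      c₁ * Real.sqrt n *
          (a₀ * (c₂ / c₁) * (1 / Real.sqrt n) +
            ∑ k ∈ Finset.Icc 1 (n - 1), (a * ρ ^ n) ^ ((k : ℝ) / n))
        < c₂ * Real.sqrt n * (a * ρ ^ n) := by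
  obtain ⟨hρ0, hρ1⟩ := hρ
  have hc₁ : 0 < c₁ := lt_of_lt_of_le hc₂ hc
  set M : ℝ := (c₂ + 2 * c₁) / c₂ with hMdef
  have hM1 : 1 < M := by
    rw [hMdef, lt_div_iff₀ hc₂]
    nlinarith
  refine ⟨1, fun n hn a a₀ ak ha hak ha₀ => ?_⟩
  have hn0 : (0:ℝ) < n := by exact_mod_cast hn
  have hsn : 0 < Real.sqrt n := Real.sqrt_pos.mpr hn0
  set x : ℝ := a * ρ ^ n with hxdef
  have hMx : M ^ n ≤ x := by
    have h1 : (M / ρ) ^ n * ρ ^ n ≤ a * ρ ^ n := by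
      apply mul_le_mul_of_nonneg_right _ (by positivity)
      calc (M / ρ) ^ n = ((c₂ + 2 * c₁) / (c₂ * ρ)) ^ n := by
            rw [hMdef, div_div]
        _ ≤ a := ha
    calc M ^ n = (M / ρ) ^ n * ρ ^ n :=
          (div_pow M ρ n ▸ div_mul_cancel₀ (M ^ n) (by positivity : (ρ:ℝ) ^ n ≠ 0)).symm
      _ ≤ x := h1
  have hx0 : 0 < x := lt_of_lt_of_le (by positivity) hMx
  set y : ℝ := x ^ ((1:ℝ)/n) with hydef
  have hMy : M ≤ y := by
    have := Real.rpow_le_rpow (by positivity) hMx (by positivity : (0:ℝ) ≤ 1/n)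
    rwa [← Real.rpow_natCast M n, ← Real.rpow_mul (le_of_lt (lt_trans zero_lt_one hM1)),
      mul_one_div, div_self (ne_of_gt hn0), Real.rpow_one] at this
  have hy1 : 1 < y := lt_of_lt_of_le hM1 hMy
  have hyn : y ^ n = x := by
    rw [hydef, ← Real.rpow_natCast (x ^ ((1:ℝ)/n)) n, ← Real.rpow_mul hx0.le,
      one_div_mul_cancel (ne_of_gt hn0), Real.rpow_one]
  -- rewrite terms of the sum
  have hterm : ∀ k : ℕ, x ^ ((k : ℝ) / n) = y ^ k := by
    intro k
    rw [hydef, ← Real.rpow_natCast (x ^ ((1:ℝ)/n)) k, ← Real.rpow_mul hx0.le,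
      one_div, inv_mul_eq_div]
  have hsum : ∑ k ∈ Finset.Icc 1 (n - 1), x ^ ((k : ℝ) / n) ≤ x / (y - 1) := by
    rw [Finset.sum_congr rfl (fun k _ => hterm k)]
    have hsub : Finset.Icc 1 (n - 1) ⊆ Finset.range n := by
      intro k hk
      simp only [Finset.mem_Icc] at hk
      simp only [Finset.mem_range]
      omega
    calc ∑ k ∈ Finset.Icc 1 (n - 1), y ^ k
        ≤ ∑ k ∈ Finset.range n, y ^ k := by
          apply Finset.sum_le_sum_of_subset_of_nonneg hsub
          intro k _ _; positivity
      _ = (y ^ n - 1) / (y - 1) := geom_sum_eq (ne_of_gt hy1) n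
      _ ≤ y ^ n / (y - 1) := by
          gcongr
          · linarith
      _ = x / (y - 1) := by rw [hyn]
  -- pieces
  have hM1' : M - 1 = 2 * c₁ / c₂ := by rw [hMdef]; field_simp; ring
  have hA : c₂ * a₀ < c₂ * Real.sqrt n / 2 * x := by
    have h1 : c₂ * a₀ < c₂ * ((Real.sqrt n / 2) * (c₂ / c₁) * M ^ n) :=
      mul_lt_mul_of_pos_left ha₀ hc₂
    have h2 : c₂ * ((Real.sqrt n / 2) * (c₂ / c₁) * M ^ n)
        ≤ c₂ * ((Real.sqrt n / 2) * 1 * M ^ n) := by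
      have hd : c₂ / c₁ ≤ 1 := (div_le_one hc₁).mpr hc
      have h := mul_le_mul_of_nonneg_left hd
        (show (0:ℝ) ≤ c₂ * (Real.sqrt n / 2) * M ^ n by positivity)
      nlinarith [h]
    have h3 : c₂ * ((Real.sqrt n / 2) * 1 * M ^ n) ≤ c₂ * Real.sqrt n / 2 * x := by
      have := mul_le_mul_of_nonneg_left hMx (by positivity : (0:ℝ) ≤ c₂ * Real.sqrt n / 2)
      linarith [this]
    linarith
  have hB : c₁ * Real.sqrt n * (∑ k ∈ Finset.Icc 1 (n - 1), x ^ ((k : ℝ) / n))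
      ≤ c₂ * Real.sqrt n / 2 * x := by
    have hy2 : 2 * c₁ / c₂ ≤ y - 1 := by rw [← hM1']; linarith
    have hd0 : (0:ℝ) < 2 * c₁ / c₂ := by positivity
    have h4 : x / (y - 1) ≤ x / (2 * c₁ / c₂) :=
      div_le_div_of_nonneg_left hx0.le hd0 hy2
    have h5 : x / (2 * c₁ / c₂) = c₂ / (2 * c₁) * x := by field_simp
    have h6 : ∑ k ∈ Finset.Icc 1 (n - 1), x ^ ((k : ℝ) / n) ≤ c₂ / (2 * c₁) * x := by
      rw [← h5]; exact le_trans hsum h4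
    have h7 : c₁ * Real.sqrt n * (c₂ / (2 * c₁) * x) = c₂ * Real.sqrt n / 2 * x := by
      field_simp
    calc c₁ * Real.sqrt n * (∑ k ∈ Finset.Icc 1 (n - 1), x ^ ((k : ℝ) / n))
        ≤ c₁ * Real.sqrt n * (c₂ / (2 * c₁) * x) :=
          mul_le_mul_of_nonneg_left h6 (by positivity)
      _ = c₂ * Real.sqrt n / 2 * x := h7
  have hkey : c₁ * Real.sqrt n * (a₀ * (c₂ / c₁) * (1 / Real.sqrt n)) = c₂ * a₀ := by
    field_simp
  have : c₂ * Real.sqrt n * x = c₂ * Real.sqrt n / 2 * x + c₂ * Real.sqrt n / 2 * x := by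
    ring
  rw [mul_add, hkey, this]
  exact add_lt_add_of_lt_of_le hA hB
end
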